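/- arXiv:1712.10275 — 2 statements merged into one kernel-verified Lean document; each statement's English description precedes it below -/
import Mathlib

section
/- If the Hamiltonian H(x,p) is convex in p and independent of t, then for any C^1 function u : 𝕋^{d+1} → ℝ, letting ū(x) = ∫_0^1 u(x,t) dt, one has ∫_{𝕋^{d+1}} e^{k(u_t + H(x,∇u))} ≥ ∫_{𝕋^d} e^{k H(x, ∇ū(x))}. Consequently the infimum of I_k over time-periodic functions equals the infimum over time-independent functions, i.e. H̄_k = H̄_{k,a}. -/
open MeasureTheory

noncomputable section

def gradx {d : ℕ} (u : (Fin d → ℝ) → ℝ → ℝ) (x : Fin d → ℝ) (t : ℝ) : Fin d → ℝ :=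
  fun i => fderiv ℝ (fun y => u y t) x (Pi.single i 1)

def ut {d : ℕ} (u : (Fin d → ℝ) → ℝ → ℝ) (x : Fin d → ℝ) (t : ℝ) : ℝ :=
  deriv (u x) t

def cube (d : ℕ) : Set (Fin d → ℝ) := Set.Icc 0 1

/-- admissible time-periodic competitors -/
def Adm {d : ℕ} (u : (Fin d → ℝ) → ℝ → ℝ) : Prop :=
  ContDiff ℝ 1 (fun p : (Fin d → ℝ) × ℝ => u p.1 p.2) ∧
  (∀ (x : Fin d → ℝ) (t : ℝ) (m : Fin d → ℤ) (j : ℤ),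
    u (x + fun i => (m i : ℝ)) (t + (j : ℝ)) = u x t)

/-- admissible time-independent competitors -/
def AdmA {d : ℕ} (v : (Fin d → ℝ) → ℝ) : Prop :=
  ContDiff ℝ 1 v ∧
  (∀ (x : Fin d → ℝ) (m : Fin d → ℤ), v (x + fun i => (m i : ℝ)) = v x)

/-- the time average `ū(x) = ∫_0^1 u(x,t) dt` -/
def ubar {d : ℕ} (u : (Fin d → ℝ) → ℝ → ℝ) (x : Fin d → ℝ) : ℝ :=
  ∫ t in Set.Icc (0:ℝ) 1, u x t


section Stmt3AuxSec

open Set Metric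

namespace Stmt3Aux

lemma prob01 : IsProbabilityMeasure (volume.restrict (Set.Icc (0:ℝ) 1)) :=
  ⟨by simp [Real.volume_Icc]⟩

variable {d : ℕ} {u : (Fin d → ℝ) → ℝ → ℝ}

/-- partial derivative in `x` as a continuous linear map -/
def D (u : (Fin d → ℝ) → ℝ → ℝ) (x : Fin d → ℝ) (t : ℝ) : (Fin d → ℝ) →L[ℝ] ℝ :=
  (fderiv ℝ (fun p : (Fin d → ℝ) × ℝ => u p.1 p.2) (x, t)).comp
    (ContinuousLinearMap.inl ℝ (Fin d → ℝ) ℝ)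

lemma hDx (hu : Adm u) (x : Fin d → ℝ) (t : ℝ) :
    HasFDerivAt (fun y => u y t) (D u x t) x := by
  have h1 : HasFDerivAt (fun y : Fin d → ℝ => (y, t))
      (ContinuousLinearMap.inl ℝ (Fin d → ℝ) ℝ) x := hasFDerivAt_prodMk_left x t
  exact ((hu.1.differentiable one_ne_zero (x, t)).hasFDerivAt).comp x h1

lemma hDt (hu : Adm u) (x : Fin d → ℝ) (t : ℝ) :
    HasDerivAt (u x) ((fderiv ℝ (fun p : (Fin d → ℝ) × ℝ => u p.1 p.2) (x, t)) (0, 1)) t := by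
  have h1 : HasDerivAt (fun s : ℝ => ((x, s) : (Fin d → ℝ) × ℝ)) ((0 : Fin d → ℝ), (1:ℝ)) t :=
    (hasDerivAt_const t x).prodMk (hasDerivAt_id t)
  exact ((hu.1.differentiable one_ne_zero (x, t)).hasFDerivAt).comp_hasDerivAt t h1

lemma ut_eq (hu : Adm u) (x : Fin d → ℝ) (t : ℝ) :
    ut u x t = (fderiv ℝ (fun p : (Fin d → ℝ) × ℝ => u p.1 p.2) (x, t)) (0, 1) :=
  (hDt hu x t).deriv

lemma gradx_eq (hu : Adm u) (x : Fin d → ℝ) (t : ℝ) :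
    gradx u x t = fun i => D u x t (Pi.single i 1) := by
  funext i
  simp only [gradx]
  rw [(hDx hu x t).fderiv]

lemma D_cont (hu : Adm u) : Continuous fun p : (Fin d → ℝ) × ℝ => D u p.1 p.2 := by
  have h := (hu.1.continuous_fderiv one_ne_zero).comp (continuous_fst.prodMk continuous_snd)
  exact h.clm_comp continuous_const

lemma ut_cont (hu : Adm u) : Continuous fun p : (Fin d → ℝ) × ℝ => ut u p.1 p.2 := by
  have h := (hu.1.continuous_fderiv one_ne_zero).comp (continuous_fst.prodMk continuous_snd)
  have h2 : Continuous fun p : (Fin d → ℝ) × ℝ =>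
      (fderiv ℝ (fun q : (Fin d → ℝ) × ℝ => u q.1 q.2) (p.1, p.2)) ((0 : Fin d → ℝ), (1:ℝ)) :=
    h.clm_apply continuous_const
  have : (fun p : (Fin d → ℝ) × ℝ => ut u p.1 p.2) = fun p =>
      (fderiv ℝ (fun q : (Fin d → ℝ) × ℝ => u q.1 q.2) (p.1, p.2)) ((0 : Fin d → ℝ), (1:ℝ)) := by
    funext p; exact ut_eq hu p.1 p.2
  rw [this]; exact h2

lemma gradx_cont (hu : Adm u) : Continuous fun p : (Fin d → ℝ) × ℝ => gradx u p.1 p.2 := by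
  have : (fun p : (Fin d → ℝ) × ℝ => gradx u p.1 p.2)
      = fun p => fun i => D u p.1 p.2 (Pi.single i 1) := by
    funext p; exact gradx_eq hu p.1 p.2
  rw [this]
  exact continuous_pi fun i => (D_cont hu).clm_apply continuous_const


lemma per_t (hu : Adm u) (x : Fin d → ℝ) (t : ℝ) : u x (t + 1) = u x t := by
  have h := hu.2 x t 0 1
  simpa [show (x + fun _ : Fin d => (0:ℝ)) = x by funext i; simp] using h

lemma int_ut (hu : Adm u) (x : Fin d → ℝ) :
    ∫ t in Set.Icc (0:ℝ) 1, ut u x t = 0 := by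
  have hc : Continuous fun t => ut u x t :=
    (ut_cont hu).comp (continuous_const.prodMk continuous_id)
  rw [integral_Icc_eq_integral_Ioc, ← intervalIntegral.integral_of_le (zero_le_one)]
  have h := intervalIntegral.integral_deriv_eq_sub
    (f := u x) (a := (0:ℝ)) (b := 1)
    (fun t _ => (hDt hu x t).differentiableAt) (hc.intervalIntegrable 0 1)
  rw [show (fun t => ut u x t) = deriv (u x) from rfl, h]
  rw [show (1:ℝ) = 0 + 1 by ring, per_t hu x 0, sub_self]

lemma D_integrableOn (hu : Adm u) (x : Fin d → ℝ) :
    IntegrableOn (fun t => D u x t) (Set.Icc (0:ℝ) 1) :=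
  ((D_cont hu).comp (continuous_const.prodMk continuous_id)).integrableOn_Icc

lemma gradx_integrableOn (hu : Adm u) (x : Fin d → ℝ) :
    IntegrableOn (fun t => gradx u x t) (Set.Icc (0:ℝ) 1) :=
  ((gradx_cont hu).comp (continuous_const.prodMk continuous_id)).integrableOn_Icc

lemma ubar_hasFDerivAt (hu : Adm u) (x₀ : Fin d → ℝ) :
    HasFDerivAt (ubar u) (∫ t in Set.Icc (0:ℝ) 1, D u x₀ t) x₀ := by
  haveI := prob01
  obtain ⟨C, hC⟩ := ((isCompact_closedBall x₀ 1).prod isCompact_Icc).exists_bound_of_continuousOn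
    (s := closedBall x₀ 1 ×ˢ Set.Icc (0:ℝ) 1) ((D_cont hu).continuousOn)
  exact hasFDerivAt_integral_of_dominated_of_fderiv_le (ball_mem_nhds x₀ one_pos)
    (Filter.Eventually.of_forall fun x =>
      ((hu.1.continuous.comp (continuous_const.prodMk continuous_id)).aestronglyMeasurable))
    ((hu.1.continuous.comp (continuous_const.prodMk continuous_id)).integrableOn_Icc)
    (((D_cont hu).comp (continuous_const.prodMk continuous_id)).aestronglyMeasurable)
    (((ae_restrict_mem measurableSet_Icc).mono) fun t ht x hx =>
      hC (x, t) ⟨ball_subset_closedBall hx, ht⟩)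
    (integrable_const C)
    (Filter.Eventually.of_forall fun t x _ => hDx hu x t)

lemma ubar_fderiv (hu : Adm u) (x : Fin d → ℝ) :
    fderiv ℝ (ubar u) x = ∫ t in Set.Icc (0:ℝ) 1, D u x t :=
  (ubar_hasFDerivAt hu x).fderiv

lemma grad_ubar_eq (hu : Adm u) (x : Fin d → ℝ) :
    (fun i => fderiv ℝ (ubar u) x (Pi.single i 1))
      = ∫ t in Set.Icc (0:ℝ) 1, gradx u x t := by
  funext i
  rw [ubar_fderiv hu, ContinuousLinearMap.integral_apply (D_integrableOn hu x)]
  have hp := (ContinuousLinearMap.proj (R := ℝ) (φ := fun _ : Fin d => ℝ) i).integral_comp_comm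
    (gradx_integrableOn hu x)
  refine Eq.trans ?_ hp
  congr 1
  funext t
  rw [gradx_eq hu x t]
  rfl

lemma fderiv_ubar_cont (hu : Adm u) : Continuous fun x => fderiv ℝ (ubar u) x := by
  haveI := prob01
  rw [continuous_iff_continuousAt]
  intro x₀
  have he : (fun x => fderiv ℝ (ubar u) x) = fun x => ∫ t in Set.Icc (0:ℝ) 1, D u x t := by
    funext x; exact ubar_fderiv hu x
  rw [he]
  obtain ⟨C, hC⟩ := ((isCompact_closedBall x₀ 1).prod isCompact_Icc).exists_bound_of_continuousOn
    (s := closedBall x₀ 1 ×ˢ Set.Icc (0:ℝ) 1) ((D_cont hu).continuousOn)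
  apply continuousAt_of_dominated
    (Filter.Eventually.of_forall fun x =>
      (((D_cont hu).comp (continuous_const.prodMk continuous_id)).aestronglyMeasurable))
    ?_ (integrable_const C)
    (Filter.Eventually.of_forall fun t =>
      ((D_cont hu).comp (continuous_id.prodMk continuous_const)).continuousAt)
  filter_upwards [ball_mem_nhds x₀ one_pos] with x hx
  filter_upwards [ae_restrict_mem measurableSet_Icc] with t ht
  exact hC (x, t) ⟨ball_subset_closedBall hx, ht⟩

lemma ubar_contDiff (hu : Adm u) : ContDiff ℝ 1 (ubar u) := by
  rw [contDiff_one_iff_fderiv]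
  exact ⟨fun x => (ubar_hasFDerivAt hu x).differentiableAt, fderiv_ubar_cont hu⟩


variable {k : ℕ} {H : (Fin d → ℝ) → (Fin d → ℝ) → ℝ}

lemma key (hu : Adm u)
    (hHc : Continuous (fun p : (Fin d → ℝ) × (Fin d → ℝ) => H p.1 p.2))
    (hconv : ∀ x, ConvexOn ℝ Set.univ (H x)) (x : Fin d → ℝ) :
    Real.exp ((k : ℝ) * H x (fun i => fderiv ℝ (ubar u) x (Pi.single i 1)))
      ≤ ∫ t in Set.Icc (0:ℝ) 1,
          Real.exp ((k : ℝ) * (ut u x t + H x (gradx u x t))) := by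
  haveI := prob01
  set μ := volume.restrict (Set.Icc (0:ℝ) 1) with hμ
  have hHx : Continuous (H x) := hHc.comp (continuous_const.prodMk continuous_id)
  have hw : Continuous fun t => gradx u x t :=
    (gradx_cont hu).comp (continuous_const.prodMk continuous_id)
  have hq : Continuous fun t => ut u x t :=
    (ut_cont hu).comp (continuous_const.prodMk continuous_id)
  have hHw : Continuous fun t => H x (gradx u x t) := hHx.comp hw
  have hg : Continuous fun t => (k : ℝ) * (ut u x t + H x (gradx u x t)) :=
    continuous_const.mul (hq.add hHw)
  -- Jensen for H
  have hJ1 : H x (∫ t, gradx u x t ∂μ) ≤ ∫ t, H x (gradx u x t) ∂μ := by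
    have := (hconv x).map_average_le (μ := μ) hHx.continuousOn isClosed_univ
      (Filter.Eventually.of_forall fun _ => Set.mem_univ _)
      (hw.integrableOn_Icc)
      (hHw.integrableOn_Icc)
    rwa [average_eq_integral, average_eq_integral] at this
  -- Jensen for exp
  have hJ2 : Real.exp (∫ t, (k : ℝ) * (ut u x t + H x (gradx u x t)) ∂μ)
      ≤ ∫ t, Real.exp ((k : ℝ) * (ut u x t + H x (gradx u x t))) ∂μ := by
    have := convexOn_exp.map_average_le (μ := μ) Real.continuous_exp.continuousOn isClosed_univ
      (Filter.Eventually.of_forall fun _ => Set.mem_univ _)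
      (hg.integrableOn_Icc)
      ((Real.continuous_exp.comp hg).integrableOn_Icc)
    rwa [average_eq_integral, average_eq_integral] at this
  have hint : ∫ t, (k : ℝ) * (ut u x t + H x (gradx u x t)) ∂μ
      = (k : ℝ) * ∫ t, H x (gradx u x t) ∂μ := by
    rw [integral_const_mul, integral_add hq.integrableOn_Icc hHw.integrableOn_Icc,
      int_ut hu x, zero_add]
  calc Real.exp ((k : ℝ) * H x (fun i => fderiv ℝ (ubar u) x (Pi.single i 1)))
      = Real.exp ((k : ℝ) * H x (∫ t, gradx u x t ∂μ)) := by rw [grad_ubar_eq hu x]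
    _ ≤ Real.exp ((k : ℝ) * ∫ t, H x (gradx u x t) ∂μ) := by
        exact Real.exp_le_exp.2 (mul_le_mul_of_nonneg_left hJ1 (Nat.cast_nonneg k))
    _ = Real.exp (∫ t, (k : ℝ) * (ut u x t + H x (gradx u x t)) ∂μ) := by rw [hint]
    _ ≤ _ := hJ2


lemma lhs_cont (hu : Adm u)
    (hHc : Continuous (fun p : (Fin d → ℝ) × (Fin d → ℝ) => H p.1 p.2)) :
    Continuous fun x => Real.exp ((k : ℝ) * H x (fun i =>
      fderiv ℝ (ubar u) x (Pi.single i 1))) := by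
  have h1 : Continuous fun x => (fun i => fderiv ℝ (ubar u) x (Pi.single i 1)) :=
    continuous_pi fun i => (fderiv_ubar_cont hu).clm_apply continuous_const
  exact Real.continuous_exp.comp (continuous_const.mul
    (hHc.comp (continuous_id.prodMk h1)))

lemma inner_exp_cont (hu : Adm u)
    (hHc : Continuous (fun p : (Fin d → ℝ) × (Fin d → ℝ) => H p.1 p.2)) :
    Continuous fun p : (Fin d → ℝ) × ℝ =>
      Real.exp ((k : ℝ) * (ut u p.1 p.2 + H p.1 (gradx u p.1 p.2))) :=
  Real.continuous_exp.comp (continuous_const.mul ((ut_cont hu).add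
    (hHc.comp (continuous_fst.prodMk (gradx_cont hu)))))

lemma rhs_cont (hu : Adm u)
    (hHc : Continuous (fun p : (Fin d → ℝ) × (Fin d → ℝ) => H p.1 p.2)) :
    Continuous fun x => ∫ t in Set.Icc (0:ℝ) 1,
      Real.exp ((k : ℝ) * (ut u x t + H x (gradx u x t))) := by
  haveI := prob01
  rw [continuous_iff_continuousAt]
  intro x₀
  set e := fun p : (Fin d → ℝ) × ℝ =>
    Real.exp ((k : ℝ) * (ut u p.1 p.2 + H p.1 (gradx u p.1 p.2))) with he
  have hec : Continuous e := inner_exp_cont hu hHc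
  obtain ⟨C, hC⟩ := ((isCompact_closedBall x₀ 1).prod isCompact_Icc).exists_bound_of_continuousOn
    (s := closedBall x₀ 1 ×ˢ Set.Icc (0:ℝ) 1) hec.continuousOn
  apply continuousAt_of_dominated
    (Filter.Eventually.of_forall fun x =>
      ((hec.comp (continuous_const.prodMk continuous_id)).aestronglyMeasurable))
    ?_ (integrable_const C)
    (Filter.Eventually.of_forall fun t =>
      (hec.comp (continuous_id.prodMk continuous_const)).continuousAt)
  filter_upwards [ball_mem_nhds x₀ one_pos] with x hx
  filter_upwards [ae_restrict_mem measurableSet_Icc] with t ht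
  exact hC (x, t) ⟨ball_subset_closedBall hx, ht⟩

lemma part1 (hu : Adm u)
    (hHc : Continuous (fun p : (Fin d → ℝ) × (Fin d → ℝ) => H p.1 p.2))
    (hconv : ∀ x, ConvexOn ℝ Set.univ (H x)) :
    (∫ x in cube d, Real.exp ((k : ℝ) * H x (fun i =>
        fderiv ℝ (ubar u) x (Pi.single i 1)))) ≤
      ∫ x in cube d, ∫ t in Set.Icc (0:ℝ) 1,
        Real.exp ((k : ℝ) * (ut u x t + H x (gradx u x t))) := by
  have h1 : IntegrableOn (fun x => Real.exp ((k : ℝ) * H x (fun i =>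
      fderiv ℝ (ubar u) x (Pi.single i 1)))) (cube d) :=
    (lhs_cont hu hHc).integrableOn_Icc
  have h2 : IntegrableOn (fun x => ∫ t in Set.Icc (0:ℝ) 1,
      Real.exp ((k : ℝ) * (ut u x t + H x (gradx u x t)))) (cube d) :=
    (rhs_cont hu hHc).integrableOn_Icc
  exact setIntegral_mono_on h1 h2 measurableSet_Icc
    (fun x _ => key hu hHc hconv x)

end Stmt3Aux

end Stmt3AuxSec

/-- If `H = H(x,p)` is convex in `p` and independent of `t`, then for any
admissible `u`, `I_k[u] ≥ ∫_{𝕋^d} e^{k H(x,∇ū)}`, and consequently the infimum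
of `I_k` over time-periodic functions equals the infimum over time-independent
ones, i.e. `H̄_k = H̄_{k,a}`. -/
theorem stmt_3 (d k : ℕ) (hk : 0 < k)
    (H : (Fin d → ℝ) → (Fin d → ℝ) → ℝ)
    (hHc : Continuous (fun p : (Fin d → ℝ) × (Fin d → ℝ) => H p.1 p.2))
    (hHper : ∀ (x : Fin d → ℝ) (p : Fin d → ℝ) (m : Fin d → ℤ),
      H (x + fun i => (m i : ℝ)) p = H x p)
    (hconv : ∀ x, ConvexOn ℝ Set.univ (H x)) :
    (∀ u, Adm u →
      (∫ x in cube d, Real.exp ((k : ℝ) * H x (fun i =>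
          fderiv ℝ (ubar u) x (Pi.single i 1)))) ≤
      ∫ x in cube d, ∫ t in Set.Icc (0:ℝ) 1,
        Real.exp ((k : ℝ) * (ut u x t + H x (gradx u x t)))) ∧
    sInf {I : ℝ | ∃ u, Adm u ∧ I = ∫ x in cube d, ∫ t in Set.Icc (0:ℝ) 1,
        Real.exp ((k : ℝ) * (ut u x t + H x (gradx u x t)))} =
    sInf {I : ℝ | ∃ v, AdmA v ∧ I = ∫ x in cube d,
        Real.exp ((k : ℝ) * H x (fun i => fderiv ℝ v x (Pi.single i 1)))} := by
  classical
  refine ⟨fun u hu => Stmt3Aux.part1 hu hHc hconv, ?_⟩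
  set A := {I : ℝ | ∃ u, Adm u ∧ I = ∫ x in cube d, ∫ t in Set.Icc (0:ℝ) 1,
      Real.exp ((k : ℝ) * (ut u x t + H x (gradx u x t)))} with hA
  set B := {I : ℝ | ∃ v, AdmA v ∧ I = ∫ x in cube d,
      Real.exp ((k : ℝ) * H x (fun i => fderiv ℝ v x (Pi.single i 1)))} with hB
  have hAlb : (0:ℝ) ∈ lowerBounds A := by
    rintro a ⟨u, hu, rfl⟩
    exact integral_nonneg fun x => integral_nonneg fun t => (Real.exp_pos _).le
  have hBlb : (0:ℝ) ∈ lowerBounds B := by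
    rintro b ⟨v, hv, rfl⟩
    exact integral_nonneg fun x => (Real.exp_pos _).le
  have hAne : A.Nonempty := by
    refine ⟨_, (fun _ _ => (0:ℝ)), ⟨contDiff_const, fun _ _ _ _ => rfl⟩, rfl⟩
  have hBsubA : B ⊆ A := by
    rintro I ⟨v, hv, rfl⟩
    refine ⟨fun x _ => v x, ⟨hv.1.comp contDiff_fst, fun x t m j => hv.2 x m⟩, ?_⟩
    have hpt : ∀ x : Fin d → ℝ, (∫ t in Set.Icc (0:ℝ) 1,
        Real.exp ((k : ℝ) * (ut (fun x _ => v x) x t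
          + H x (gradx (fun x _ => v x) x t))))
        = Real.exp ((k : ℝ) * H x (fun i => fderiv ℝ v x (Pi.single i 1))) := by
      intro x
      have h1 : (fun t => Real.exp ((k : ℝ) * (ut (fun x _ => v x) x t
          + H x (gradx (fun x _ => v x) x t))))
          = fun _ : ℝ => Real.exp ((k : ℝ) * H x (fun i =>
              fderiv ℝ v x (Pi.single i 1))) := by
        funext t
        have h2 : ut (fun x _ => v x) x t = 0 := by
          simp [ut, deriv_const]
        have h3 : gradx (fun x _ => v x) x t
            = fun i => fderiv ℝ v x (Pi.single i 1) := rfl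
        rw [h2, h3, zero_add]
      rw [h1, setIntegral_const]
      simp [Real.volume_Icc]
    rw [show (fun x => ∫ t in Set.Icc (0:ℝ) 1,
        Real.exp ((k : ℝ) * (ut (fun x _ => v x) x t
          + H x (gradx (fun x _ => v x) x t))))
        = fun x => Real.exp ((k : ℝ) * H x (fun i =>
            fderiv ℝ v x (Pi.single i 1))) from funext hpt]
  have hBne : B.Nonempty :=
    ⟨_, (fun _ => (0:ℝ)), ⟨contDiff_const, fun _ _ => rfl⟩, rfl⟩
  refine le_antisymm (csInf_le_csInf ⟨0, hAlb⟩ hBne hBsubA) ?_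
  refine le_csInf hAne ?_
  rintro a ⟨u, hu, rfl⟩
  have hper : ∀ (x : Fin d → ℝ) (m : Fin d → ℤ),
      ubar u (x + fun i => (m i : ℝ)) = ubar u x := by
    intro x m
    have h : (fun t => u (x + fun i => (m i : ℝ)) t) = fun t => u x t := by
      funext t
      simpa using hu.2 x t m 0
    exact congrArg (fun f => ∫ t in Set.Icc (0:ℝ) 1, f t) h
  have hmem : (∫ x in cube d, Real.exp ((k : ℝ) * H x (fun i =>
      fderiv ℝ (ubar u) x (Pi.single i 1)))) ∈ B :=
    ⟨ubar u, ⟨Stmt3Aux.ubar_contDiff hu, hper⟩, rfl⟩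
  exact le_trans (csInf_le ⟨0, hBlb⟩ hmem) (Stmt3Aux.part1 hu hHc hconv)
end
end

section
/- Let χ : [0,∞) → [0,∞) be continuous with ∫^∞ ds/(χ(s)+1) = ∞. Then for K sufficiently large, there is a C² increasing concave function ψ : [0,2] → ℝ with ψ(0)=0, ψ' > 0 on [0,2], solving 2ψ'' = −χ(ψ') − 1 on (0,2). -/
open Set MeasureTheory Filter

/-- Let `χ : [0,∞) → [0,∞)` be continuous with `∫^∞ ds/(χ(s)+1) = ∞`.  Then for
all `K` sufficiently large there is a `C²` increasing concave function
`ψ : [0,2] → ℝ` with `ψ(0) = 0`, `0 < ψ' ≤ K` on `[0,2]`, solving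
`2ψ'' = -χ(ψ') - 1` on `(0,2)`. -/
theorem stmt_5 (χ : ℝ → ℝ) (hχc : ContinuousOn χ (Ici 0))
    (hχnn : ∀ s, 0 ≤ s → 0 ≤ χ s)
    (hdiv : ¬ IntegrableOn (fun s => (χ s + 1)⁻¹) (Ici 0)) :
    ∃ K₀ : ℝ, ∀ K ≥ K₀, ∃ ψ : ℝ → ℝ,
      ContDiffOn ℝ 2 ψ (Icc 0 2) ∧
      ψ 0 = 0 ∧
      StrictMonoOn ψ (Icc 0 2) ∧
      ConcaveOn ℝ (Icc 0 2) ψ ∧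
      (∀ r ∈ Icc (0:ℝ) 2, 0 < deriv ψ r ∧ deriv ψ r ≤ K) ∧
      (∀ r ∈ Ioo (0:ℝ) 2, 2 * deriv (deriv ψ) r = -(χ (deriv ψ r)) - 1) := by
  classical
  -- The continuous positive extension of the integrand `2/(χ(s)+1)` to all of `ℝ`.
  set F : ℝ → ℝ := fun u => 2 * (χ (max u 0) + 1)⁻¹ with hFdef
  have hmaxmem : ∀ u : ℝ, max u 0 ∈ Ici (0:ℝ) := fun u => mem_Ici.mpr (le_max_right _ _)
  have hχcomp : Continuous fun u : ℝ => χ (max u 0) :=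
    hχc.comp_continuous (continuous_id.max continuous_const) hmaxmem
  have hχ1pos : ∀ u : ℝ, 0 < χ (max u 0) + 1 := fun u => by
    have := hχnn _ (hmaxmem u); linarith
  have hFcont : Continuous F :=
    continuous_const.mul ((hχcomp.add continuous_const).inv₀ fun u => (hχ1pos u).ne')
  have hFpos : ∀ u, 0 < F u := fun u => by
    have := hχ1pos u
    simp only [hFdef]
    positivity
  -- `H t = ∫_0^t F`.
  set H : ℝ → ℝ := fun t => ∫ u in (0:ℝ)..t, F u with hHdef
  have hHd : ∀ t, HasDerivAt H (F t) t := fun t =>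
    (hFcont.integral_hasStrictDerivAt 0 t).hasDerivAt
  have hHcont : Continuous H :=
    continuous_iff_continuousAt.2 fun t => (hHd t).continuousAt
  have hHmono : StrictMono H := by
    apply strictMono_of_deriv_pos
    intro t
    rw [(hHd t).deriv]
    exact hFpos t
  -- `H` tends to `∞` at `∞` (this is where the divergence hypothesis is used).
  have hHtop : Tendsto H atTop atTop := by
    apply tendsto_atTop_atTop_of_monotone' hHmono.monotone
    intro hbdd
    obtain ⟨M, hM⟩ := hbdd
    have hIoi : IntegrableOn F (Ioi 0) := by
      refine integrableOn_Ioi_of_intervalIntegral_norm_bounded M 0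
        (fun i : ℝ => hFcont.integrableOn_Ioc) tendsto_id (Eventually.of_forall fun i => ?_)
      have : (∫ x in (0:ℝ)..i, ‖F x‖) = H i := by
        apply intervalIntegral.integral_congr
        intro x _
        exact Real.norm_of_nonneg (hFpos x).le
      simp only [id_eq]
      rw [this]
      exact hM (mem_range_self i)
    have hIci : IntegrableOn F (Ici 0) := (integrableOn_Ici_iff_integrableOn_Ioi).mpr hIoi
    refine hdiv ?_
    have h2 : IntegrableOn (fun s => 2⁻¹ * F s) (Ici 0) := hIci.const_mul _
    refine h2.congr_fun (fun s hs => ?_) measurableSet_Ici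
    simp only [hFdef]
    rw [max_eq_left hs]
    ring
  -- `H` tends to `-∞` at `-∞` since `F` is constant on `(-∞, 0]`.
  have hHbot : Tendsto H atBot atBot := by
    have heq : ∀ t : ℝ, t ≤ 0 → H t = t * F 0 := by
      intro t ht
      have : H t = ∫ u in (0:ℝ)..t, F 0 := by
        apply intervalIntegral.integral_congr
        intro x hx
        have hx0 : x ≤ 0 := by
          rcases hx with ⟨h1, h2⟩
          simpa [min_eq_right ht, max_eq_left ht] using h2
        simp only [hFdef]
        rw [max_eq_right hx0, max_eq_right le_rfl]
      rw [this, intervalIntegral.integral_const, smul_eq_mul]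
      ring
    have hlin : Tendsto (fun t : ℝ => t * F 0) atBot atBot :=
      Tendsto.atBot_mul_const (hFpos 0) tendsto_id
    exact hlin.congr' (by filter_upwards [eventually_le_atBot (0:ℝ)] with t ht
      using (heq t ht).symm)
  -- Choose `K₀` so large that `∫_1^K F ≥ 2` for all `K ≥ K₀`.
  obtain ⟨K₀, hK₀⟩ := eventually_atTop.mp (hHtop.eventually (eventually_ge_atTop (H 1 + 2)))
  refine ⟨K₀, fun K hK => ?_⟩
  have hHK : H 1 + 2 ≤ H K := hK₀ K hK
  -- `G t = ∫_t^K F`, a strictly decreasing surjection `ℝ → ℝ`.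
  set G : ℝ → ℝ := fun t => H K - H t with hGdef
  have hGanti : StrictAnti G := fun a b hab => sub_lt_sub_left (hHmono hab) _
  have hGcont : Continuous G := continuous_const.sub hHcont
  have hGd : ∀ t, HasDerivAt G (-(F t)) t := fun t => (hHd t).const_sub (H K)
  have hGsurj : Function.Surjective G := by
    apply hGcont.surjective'
    · exact (tendsto_atTop_add_const_left atBot (H K)
        (tendsto_neg_atBot_atTop.comp hHbot)).congr
        (fun t => (sub_eq_add_neg (H K) (H t)).symm)
    · exact (tendsto_atBot_add_const_left atTop (H K)
        (tendsto_neg_atTop_atBot.comp hHtop)).congr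
        (fun t => (sub_eq_add_neg (H K) (H t)).symm)
  have hGinj : Function.Injective G := hGanti.injective
  -- `φ` is the inverse of `G`.
  set φ : ℝ → ℝ := Function.invFun G with hφdef
  have hGφ : ∀ r, G (φ r) = r := fun r => Function.rightInverse_invFun hGsurj r
  have hφG : ∀ t, φ (G t) = t := fun t => Function.leftInverse_invFun hGinj t
  -- `φ` is continuous, via the order isomorphism `t ↦ -G t`.
  have hφcont : Continuous φ := by
    have hmono : StrictMono (fun t => -G t) := fun a b hab => neg_lt_neg (hGanti hab)
    have hsurj : Function.Surjective (fun t => -G t) := fun y => by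
      obtain ⟨t, ht⟩ := hGsurj (-y)
      refine ⟨t, ?_⟩
      show -G t = y
      rw [ht]; ring
    set e : ℝ ≃o ℝ := StrictMono.orderIsoOfSurjective _ hmono hsurj with hedef
    have hφe : φ = fun r => e.symm (-r) := by
      funext r
      apply hGinj
      rw [hGφ]
      have := e.apply_symm_apply (-r)
      have h2 : -G (e.symm (-r)) = -r := this
      linarith
    rw [hφe]
    exact e.symm.continuous.comp continuous_neg
  have hφanti : Antitone φ := fun a b hab => by
    have : G (φ a) ≤ G (φ b) := by rw [hGφ, hGφ]; exact hab
    exact hGanti.le_iff_ge.mp this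
  have hφK : φ 0 = K := by
    have hGK : G K = 0 := sub_self _
    rw [← hGK, hφG]
  have hφ2 : 1 ≤ φ 2 := by
    have hG1 : 2 ≤ G 1 := by simp only [hGdef]; linarith
    have : G (φ 2) ≤ G 1 := by rw [hGφ]; exact hG1
    exact hGanti.le_iff_ge.mp this
  have hφlb : ∀ r ∈ Icc (0:ℝ) 2, 1 ≤ φ r := fun r hr =>
    le_trans hφ2 (hφanti hr.2)
  have hφub : ∀ r ∈ Icc (0:ℝ) 2, φ r ≤ K := fun r hr => by
    rw [← hφK]; exact hφanti hr.1
  -- `φ` is differentiable with `φ' r = (-(F (φ r)))⁻¹`.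
  have hφd : ∀ r, HasDerivAt φ (-(F (φ r)))⁻¹ r := fun r =>
    HasDerivAt.of_local_left_inverse hφcont.continuousAt (hGd (φ r))
      (neg_ne_zero.mpr (hFpos _).ne') (Eventually.of_forall hGφ)
  -- Finally, `ψ r = ∫_0^r φ`.
  set ψ : ℝ → ℝ := fun r => ∫ u in (0:ℝ)..r, φ u with hψdef
  have hψd : ∀ r, HasDerivAt ψ (φ r) r := fun r =>
    (hφcont.integral_hasStrictDerivAt 0 r).hasDerivAt
  have hdψ : deriv ψ = φ := funext fun r => (hψd r).deriv
  have hdφ : deriv φ = fun r => (-(F (φ r)))⁻¹ := funext fun r => (hφd r).deriv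
  have hdφcont : Continuous (fun r => (-(F (φ r)))⁻¹) :=
    ((hFcont.comp hφcont).neg).inv₀ fun r => neg_ne_zero.mpr (hFpos _).ne'
  refine ⟨ψ, ?_, ?_, ?_, ?_, ?_, ?_⟩
  · -- C²
    have h2 : ContDiff ℝ 2 ψ := by
      rw [show (2 : WithTop ℕ∞) = 1 + 1 by norm_num, contDiff_succ_iff_deriv]
      refine ⟨fun r => (hψd r).differentiableAt, by simp, ?_⟩
      rw [hdψ, contDiff_one_iff_deriv]
      exact ⟨fun r => (hφd r).differentiableAt, by rw [hdφ]; exact hdφcont⟩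
    exact h2.contDiffOn
  · simp [hψdef]
  · -- strictly monotone
    apply strictMonoOn_of_deriv_pos (convex_Icc 0 2)
      (continuous_iff_continuousAt.2 fun r => (hψd r).continuousAt).continuousOn
    intro x hx
    rw [interior_Icc] at hx
    rw [hdψ]
    have := hφlb x ⟨hx.1.le, hx.2.le⟩
    linarith
  · -- concave
    apply AntitoneOn.concaveOn_of_deriv (convex_Icc 0 2)
      (continuous_iff_continuousAt.2 fun r => (hψd r).continuousAt).continuousOn
      (fun x _ => (hψd x).differentiableAt.differentiableWithinAt)
    rw [hdψ]
    exact hφanti.antitoneOn _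
  · -- derivative bounds
    intro r hr
    rw [hdψ]
    exact ⟨lt_of_lt_of_le one_pos (hφlb r hr), hφub r hr⟩
  · -- the ODE
    intro r hr
    have hrIcc : r ∈ Icc (0:ℝ) 2 := ⟨hr.1.le, hr.2.le⟩
    have ha : (0:ℝ) ≤ φ r := le_trans zero_le_one (hφlb r hrIcc)
    rw [hdψ, hdφ]
    have hmax : max (φ r) 0 = φ r := max_eq_left ha
    have hpos : 0 < χ (φ r) + 1 := by
      have := hχnn _ ha; linarith
    simp only [hFdef, hmax]
    field_simp
    ring
end
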